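/- Let B be an n×n exchange matrix. Suppose a positive ℚ-basis for B exists and that the mutation fan ℱ_B has a rational part ℱ'. Then a family of vectors in ℚ^n is a positive ℚ-basis for B if and only if it consists of exactly one nonzero vector in each ray of ℱ': each vector of the family lies on a ray of ℱ' and is nonzero, each ray of ℱ' contains exactly one vector of the family, and distinct members of the family lie on distinct rays. -/

import Mathlib

open scoped BigOperators

namespace MutationFanPaper

/-- An exchange matrix: a skew-symmetrizable `n × n` integer matrix. -/
def IsExchangeMatrix {n : ℕ} (B : Matrix (Fin n) (Fin n) ℤ) : Prop :=
  ∃ d : Fin n → ℤ, (∀ i, 0 < d i) ∧ ∀ i j, d i * B i j = -(d j * B j i)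

/-- Matrix mutation in direction `k`. -/
def mutate {n : ℕ} (B : Matrix (Fin n) (Fin n) ℤ) (k : Fin n) : Matrix (Fin n) (Fin n) ℤ :=
  fun i j =>
    if i = k ∨ j = k then -B i j
    else B i j + Int.sign (B k j) * max (B i k * B k j) 0

/-- The mutation map `η_k^B : ℝⁿ → ℝⁿ`. -/
noncomputable def etaStep {n : ℕ} (B : Matrix (Fin n) (Fin n) ℤ) (k : Fin n) (a : Fin n → ℝ) : Fin n → ℝ :=
  fun j =>
    if j = k then -a k
    else if 0 ≤ a k ∧ 0 ≤ B k j then a j + a k * (B k j : ℝ)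
    else if a k ≤ 0 ∧ B k j ≤ 0 then a j - a k * (B k j : ℝ)
    else a j

/-- `etaSeq B κ` is the mutation map `η_κ^B`, where the list `κ` records the indices in
order of application (the head of the list is applied first, using the matrix `B` itself). -/
noncomputable def etaSeq {n : ℕ} (B : Matrix (Fin n) (Fin n) ℤ) : List (Fin n) → (Fin n → ℝ) → Fin n → ℝ
  | [], a => a
  | k :: κ, a => etaSeq (mutate B k) κ (etaStep B k a)

/-- Iterated matrix mutation along a list of indices; the head is applied first. -/
def mutateSeq {n : ℕ} (B : Matrix (Fin n) (Fin n) ℤ) : List (Fin n) → Matrix (Fin n) (Fin n) ℤ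
  | [] => B
  | k :: κ => mutateSeq (mutate B k) κ

/-- The copy of ℤ inside ℝ, as a subring. -/
def intSR : Subring ℝ := (Int.castRingHom ℝ).range

/-- The copy of ℚ inside ℝ, as a subring. -/
noncomputable def ratSR : Subring ℝ := (Rat.castHom ℝ).range

/-- The formal expression `Σ_{i ∈ S} c i • v i` is a `B`-coherent linear relation. -/
def IsBCoherentRel {n : ℕ} (B : Matrix (Fin n) (Fin n) ℤ) {ι : Type*} (S : Finset ι)
    (v : ι → Fin n → ℝ) (c : ι → ℝ) : Prop :=
  ∀ κ : List (Fin n),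
    (∑ i ∈ S, c i • etaSeq B κ (v i)) = 0 ∧
    (∑ i ∈ S, c i • (fun j => min (etaSeq B κ (v i) j) 0)) = 0

/-- The formal expression `a - Σ_{i ∈ S} c i • v i` is a `B`-coherent linear relation. -/
def IsBCoherentDiff {n : ℕ} (B : Matrix (Fin n) (Fin n) ℤ) (a : Fin n → ℝ) {ι : Type*}
    (S : Finset ι) (v : ι → Fin n → ℝ) (c : ι → ℝ) : Prop :=
  ∀ κ : List (Fin n),
    (etaSeq B κ a - ∑ i ∈ S, c i • etaSeq B κ (v i)) = 0 ∧
    ((fun j => min (etaSeq B κ a j) 0) -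
      ∑ i ∈ S, c i • (fun j => min (etaSeq B κ (v i) j) 0)) = 0

/-- The family `b` is an `R`-spanning set for `B` (a family of vectors in `Rⁿ` such that every
`a ∈ Rⁿ` admits a `B`-coherent relation `a - Σ_{i ∈ S} c i • b i` with coefficients in `R`). -/
def SpanningOver {n : ℕ} (R : Subring ℝ) (B : Matrix (Fin n) (Fin n) ℤ) {ι : Type*}
    (b : ι → Fin n → ℝ) : Prop :=
  (∀ i j, b i j ∈ R) ∧
  ∀ a : Fin n → ℝ, (∀ j, a j ∈ R) →
    ∃ (S : Finset ι) (c : ι → ℝ), (∀ i ∈ S, c i ∈ R) ∧ IsBCoherentDiff B a S b c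

/-- The family `b` is an `R`-independent set for `B`. -/
def IndependentOver {n : ℕ} (R : Subring ℝ) (B : Matrix (Fin n) (Fin n) ℤ) {ι : Type*}
    (b : ι → Fin n → ℝ) : Prop :=
  (∀ i j, b i j ∈ R) ∧
  ∀ (S : Finset ι) (c : ι → ℝ), (∀ i ∈ S, c i ∈ R) → IsBCoherentRel B S b c →
    ∀ i ∈ S, c i = 0

/-- The family `b` is an `R`-basis for `B`. -/
def BasisOver {n : ℕ} (R : Subring ℝ) (B : Matrix (Fin n) (Fin n) ℤ) {ι : Type*}
    (b : ι → Fin n → ℝ) : Prop :=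
  SpanningOver R B b ∧ IndependentOver R B b

/-- The family `b` is a positive `R`-basis for `B`. -/
def PositiveBasisOver {n : ℕ} (R : Subring ℝ) (B : Matrix (Fin n) (Fin n) ℤ) {ι : Type*}
    (b : ι → Fin n → ℝ) : Prop :=
  BasisOver R B b ∧
  ∀ a : Fin n → ℝ, (∀ j, a j ∈ R) →
    ∃ (S : Finset ι) (c : ι → ℝ), (∀ i ∈ S, c i ∈ R ∧ 0 ≤ c i) ∧ IsBCoherentDiff B a S b c

/-- The relation `a ≡^B a'`: all mutation maps give componentwise equal signs. -/
def eqB {n : ℕ} (B : Matrix (Fin n) (Fin n) ℤ) (a a' : Fin n → ℝ) : Prop :=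
  ∀ (κ : List (Fin n)) (j : Fin n),
    Real.sign (etaSeq B κ a j) = Real.sign (etaSeq B κ a' j)

/-- A `B`-class: an equivalence class of `≡^B`. -/
def IsBClass {n : ℕ} (B : Matrix (Fin n) (Fin n) ℤ) (C : Set (Fin n → ℝ)) : Prop :=
  ∃ a, C = {a' | eqB B a a'}

/-- A `B`-cone: the closure of a `B`-class. -/
def IsBCone {n : ℕ} (B : Matrix (Fin n) (Fin n) ℤ) (C : Set (Fin n → ℝ)) : Prop :=
  ∃ D, IsBClass B D ∧ C = closure D

/-- A convex cone: a set closed under addition and positive scaling. -/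
def IsConvexCone {n : ℕ} (C : Set (Fin n → ℝ)) : Prop :=
  (∀ x ∈ C, ∀ y ∈ C, x + y ∈ C) ∧ ∀ x ∈ C, ∀ r : ℝ, 0 < r → r • x ∈ C

/-- `F` is a face of the convex cone `C`: a convex subset such that any line segment
contained in `C` whose interior meets `F` lies entirely in `F`. -/
def IsFaceOf {n : ℕ} (C F : Set (Fin n → ℝ)) : Prop :=
  F ⊆ C ∧ Convex ℝ F ∧
    ∀ x y : Fin n → ℝ, segment ℝ x y ⊆ C → (openSegment ℝ x y ∩ F).Nonempty →
      segment ℝ x y ⊆ F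

/-- The mutation fan `ℱ_B`: all `B`-cones and all faces of `B`-cones. -/
def MutFan {n : ℕ} (B : Matrix (Fin n) (Fin n) ℤ) : Set (Set (Fin n → ℝ)) :=
  {C | IsBCone B C ∨ ∃ D, IsBCone B D ∧ IsFaceOf D C}

/-- A fan: a collection of closed convex cones, closed under taking faces, in which the
intersection of any two cones is a face of each. -/
def IsFan {n : ℕ} (F : Set (Set (Fin n → ℝ))) : Prop :=
  (∀ C ∈ F, IsClosed C ∧ IsConvexCone C) ∧
  (∀ C ∈ F, ∀ G, IsFaceOf C G → G ∈ F) ∧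
  ∀ C ∈ F, ∀ D ∈ F, IsFaceOf C (C ∩ D) ∧ IsFaceOf D (C ∩ D)

/-- A set of vectors is sign-coherent if no two of its members have strictly opposite
signs in any coordinate. -/
def SignCoherentSet {n : ℕ} (S : Set (Fin n → ℝ)) : Prop :=
  ∀ x ∈ S, ∀ y ∈ S, ∀ j, ¬(x j < 0 ∧ 0 < y j)

/-- The ray spanned by a vector `v`. -/
def rayOf {n : ℕ} (v : Fin n → ℝ) : Set (Fin n → ℝ) :=
  {x | ∃ t : ℝ, 0 ≤ t ∧ x = t • v}

/-- `C` is a ray of the fan `F`: a one-dimensional cone belonging to `F`. -/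
def IsRayOf {n : ℕ} (F : Set (Set (Fin n → ℝ))) (C : Set (Fin n → ℝ)) : Prop :=
  C ∈ F ∧ ∃ v : Fin n → ℝ, v ≠ 0 ∧ C = rayOf v

/-- A simplicial cone: the nonnegative span of finitely many linearly independent vectors. -/
def IsSimplicialCone {n : ℕ} (C : Set (Fin n → ℝ)) : Prop :=
  ∃ (k : ℕ) (v : Fin k → Fin n → ℝ), LinearIndependent ℝ v ∧
    C = {x | ∃ c : Fin k → ℝ, (∀ i, 0 ≤ c i) ∧ x = ∑ i, c i • v i}

/-- A rational cone: the nonnegative span of finitely many rational vectors. -/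
def IsRationalCone {n : ℕ} (C : Set (Fin n → ℝ)) : Prop :=
  ∃ (k : ℕ) (v : Fin k → Fin n → ℝ), (∀ i j, ∃ q : ℚ, v i j = (q : ℝ)) ∧
    C = {x | ∃ c : Fin k → ℝ, (∀ i, 0 ≤ c i) ∧ x = ∑ i, c i • v i}

/-- `F'` is the rational part of the fan `F`. -/
def IsRationalPart {n : ℕ} (F F' : Set (Set (Fin n → ℝ))) : Prop :=
  IsFan F' ∧ (∀ C ∈ F', IsRationalCone C) ∧
  (∀ C ∈ F', ∃ D ∈ F, C ⊆ D) ∧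
  ∀ C ∈ F, ∃ D ∈ F', D ⊆ C ∧ (∀ D' ∈ F', D' ⊆ C → D' ⊆ D) ∧
    ∀ x ∈ C, (∀ j, ∃ q : ℚ, x j = (q : ℝ)) → x ∈ D

/-- `v` is the smallest nonzero integer vector in the cone `C`. -/
def IsSmallestIntVec {n : ℕ} (C : Set (Fin n → ℝ)) (v : Fin n → ℝ) : Prop :=
  v ∈ C ∧ v ≠ 0 ∧ (∀ j, ∃ m : ℤ, v j = (m : ℝ)) ∧
    ∀ w ∈ C, w ≠ 0 → (∀ j, ∃ m : ℤ, w j = (m : ℝ)) → ‖v‖ ≤ ‖w‖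

end MutationFanPaper

namespace MutationFanPaper

variable {n : ℕ}

/-! ### Scalar helper lemmas -/

private lemma max_smul_zero {t x : ℝ} (ht : 0 ≤ t) : max (t * x) 0 = t * max x 0 := by
  rcases le_total x 0 with hx | hx
  · rw [max_eq_right (mul_nonpos_of_nonneg_of_nonpos ht hx), max_eq_right hx, mul_zero]
  · rw [max_eq_left (mul_nonneg ht hx), max_eq_left hx]

private lemma min_smul_zero {t x : ℝ} (ht : 0 ≤ t) : min (t * x) 0 = t * min x 0 := by
  rcases le_total x 0 with hx | hx
  · rw [min_eq_left (mul_nonpos_of_nonneg_of_nonpos ht hx), min_eq_left hx]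
  · rw [min_eq_right (mul_nonneg ht hx), min_eq_right hx, mul_zero]

/-- Weak same sign. -/
def WSS (a b : ℝ) : Prop := (0 ≤ a ∧ 0 ≤ b) ∨ (a ≤ 0 ∧ b ≤ 0)

private lemma max_add_zero {a b : ℝ} (h : WSS a b) :
    max (a + b) 0 = max a 0 + max b 0 := by
  rcases h with ⟨ha, hb⟩ | ⟨ha, hb⟩
  · rw [max_eq_left (add_nonneg ha hb), max_eq_left ha, max_eq_left hb]
  · rw [max_eq_right (add_nonpos ha hb), max_eq_right ha, max_eq_right hb, add_zero]

private lemma min_add_zero {a b : ℝ} (h : WSS a b) :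
    min (a + b) 0 = min a 0 + min b 0 := by
  rcases h with ⟨ha, hb⟩ | ⟨ha, hb⟩
  · rw [min_eq_right (add_nonneg ha hb), min_eq_right ha, min_eq_right hb, add_zero]
  · rw [min_eq_left (add_nonpos ha hb), min_eq_left ha, min_eq_left hb]

/-! ### Closed form for `etaStep` -/

lemma etaStep_apply (B : Matrix (Fin n) (Fin n) ℤ) (k : Fin n) (a : Fin n → ℝ) (j : Fin n) :
    etaStep B k a j = if j = k then -a k else
      a j + max (a k) 0 * max ((B k j : ℝ)) 0 - min (a k) 0 * min ((B k j : ℝ)) 0 := by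
  unfold etaStep
  by_cases hj : j = k
  · simp [hj]
  · simp only [hj, if_false]
    rcases le_or_gt 0 (a k) with hak | hak <;> rcases le_or_gt 0 (B k j) with hB | hB
    · have hBr : (0:ℝ) ≤ (B k j : ℝ) := by exact_mod_cast hB
      rw [if_pos ⟨hak, hB⟩, max_eq_left hak, max_eq_left hBr, min_eq_right hak]
      ring
    · have hBr : ((B k j : ℝ)) ≤ 0 := by exact_mod_cast hB.le
      have h1 : ¬ (0 ≤ a k ∧ 0 ≤ B k j) := by
        rintro ⟨-, h⟩; exact absurd h (not_le.2 hB)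
      rw [if_neg h1]
      by_cases h2 : a k ≤ 0 ∧ B k j ≤ 0
      · have hak0 : a k = 0 := le_antisymm h2.1 hak
        rw [if_pos h2, hak0]
        simp
      · rw [if_neg h2, max_eq_left hak, min_eq_right hak, max_eq_right hBr]
        ring
    · have h1 : ¬ (0 ≤ a k ∧ 0 ≤ B k j) := by
        rintro ⟨h, -⟩; exact absurd h (not_le.2 hak)
      have hBr : (0:ℝ) ≤ (B k j : ℝ) := by exact_mod_cast hB
      rw [if_neg h1]
      by_cases h2 : a k ≤ 0 ∧ B k j ≤ 0
      · have : (B k j : ℤ) = 0 := le_antisymm h2.2 hB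
        rw [if_pos h2, this]
        simp
      · rw [if_neg h2, max_eq_right hak.le, min_eq_left hak.le, min_eq_right hBr]
        ring
    · have hBr : ((B k j : ℝ)) ≤ 0 := by exact_mod_cast hB.le
      have h1 : ¬ (0 ≤ a k ∧ 0 ≤ B k j) := by
        rintro ⟨h, -⟩; exact absurd h (not_le.2 hak)
      rw [if_neg h1, if_pos ⟨hak.le, hB.le⟩, min_eq_left hak.le, min_eq_left hBr,
        max_eq_right hak.le]
      ring

lemma etaSeq_nil (B : Matrix (Fin n) (Fin n) ℤ) (a : Fin n → ℝ) : etaSeq B [] a = a := rfl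

lemma etaSeq_cons (B : Matrix (Fin n) (Fin n) ℤ) (k : Fin n) (κ : List (Fin n)) (a : Fin n → ℝ) :
    etaSeq B (k :: κ) a = etaSeq (mutate B k) κ (etaStep B k a) := rfl

/-! ### Continuity -/

lemma continuous_etaStep (B : Matrix (Fin n) (Fin n) ℤ) (k : Fin n) :
    Continuous (etaStep B k) := by
  apply continuous_pi
  intro j
  have : (fun a : Fin n → ℝ => etaStep B k a j) = fun a => if j = k then -a k else
      a j + max (a k) 0 * max ((B k j : ℝ)) 0 - min (a k) 0 * min ((B k j : ℝ)) 0 := by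
    funext a; exact etaStep_apply B k a j
  rw [this]
  by_cases hj : j = k
  · simp only [hj, if_pos rfl]
    exact (continuous_apply k).neg
  · simp only [hj, if_false]
    exact (((continuous_apply j).add
      (((continuous_apply k).max continuous_const).mul continuous_const)).sub
      (((continuous_apply k).min continuous_const).mul continuous_const))

lemma continuous_etaSeq (B : Matrix (Fin n) (Fin n) ℤ) (κ : List (Fin n)) :
    Continuous (etaSeq B κ) := by
  induction κ generalizing B with
  | nil => exact continuous_id
  | cons k κ ih => exact (ih (mutate B k)).comp (continuous_etaStep B k)

/-! ### Homogeneity -/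

lemma etaStep_smul (B : Matrix (Fin n) (Fin n) ℤ) (k : Fin n) (a : Fin n → ℝ) {t : ℝ}
    (ht : 0 ≤ t) : etaStep B k (t • a) = t • etaStep B k a := by
  funext j
  rw [Pi.smul_apply, smul_eq_mul, etaStep_apply, etaStep_apply]
  by_cases hj : j = k
  · subst hj; rw [if_pos rfl, if_pos rfl]; simp only [Pi.smul_apply, smul_eq_mul]; ring
  · simp only [hj, if_false, Pi.smul_apply, smul_eq_mul, max_smul_zero ht, min_smul_zero ht]
    ring

lemma etaSeq_smul (B : Matrix (Fin n) (Fin n) ℤ) (κ : List (Fin n)) (a : Fin n → ℝ) {t : ℝ}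
    (ht : 0 ≤ t) : etaSeq B κ (t • a) = t • etaSeq B κ a := by
  induction κ generalizing B a with
  | nil => rfl
  | cons k κ ih => rw [etaSeq_cons, etaSeq_cons, etaStep_smul B k a ht, ih]

lemma etaSeq_zero (B : Matrix (Fin n) (Fin n) ℤ) (κ : List (Fin n)) :
    etaSeq B κ (0 : Fin n → ℝ) = 0 := by
  have h := etaSeq_smul B κ (0 : Fin n → ℝ) (le_refl (0:ℝ))
  simpa using h

/-! ### Sign-coherent pairs and additivity -/

/-- Two vectors whose mutation images never have strictly opposite signs. -/
def SCpair (B : Matrix (Fin n) (Fin n) ℤ) (x y : Fin n → ℝ) : Prop :=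
  ∀ (κ : List (Fin n)) (j : Fin n), WSS (etaSeq B κ x j) (etaSeq B κ y j)

lemma SCpair.step {B : Matrix (Fin n) (Fin n) ℤ} {x y : Fin n → ℝ} (h : SCpair B x y)
    (k : Fin n) : SCpair (mutate B k) (etaStep B k x) (etaStep B k y) :=
  fun κ j => h (k :: κ) j

lemma etaStep_add {B : Matrix (Fin n) (Fin n) ℤ} {x y : Fin n → ℝ} (k : Fin n)
    (h : WSS (x k) (y k)) : etaStep B k (x + y) = etaStep B k x + etaStep B k y := by
  funext j
  rw [Pi.add_apply, etaStep_apply, etaStep_apply, etaStep_apply]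
  by_cases hj : j = k
  · subst hj; rw [if_pos rfl, if_pos rfl, if_pos rfl]; simp only [Pi.add_apply]; ring
  · simp only [hj, if_false, Pi.add_apply, max_add_zero h, min_add_zero h]
    ring

lemma etaSeq_add {B : Matrix (Fin n) (Fin n) ℤ} {x y : Fin n → ℝ} (h : SCpair B x y)
    (κ : List (Fin n)) : etaSeq B κ (x + y) = etaSeq B κ x + etaSeq B κ y := by
  induction κ generalizing B x y with
  | nil => rfl
  | cons k κ ih =>
      have hw : WSS (x k) (y k) := h [] k
      rw [etaSeq_cons, etaSeq_cons, etaSeq_cons, etaStep_add k hw]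
      exact ih (h.step k)

lemma etaSeq_min_add {B : Matrix (Fin n) (Fin n) ℤ} {x y : Fin n → ℝ} (h : SCpair B x y)
    (κ : List (Fin n)) (j : Fin n) :
    min (etaSeq B κ (x + y) j) 0 = min (etaSeq B κ x j) 0 + min (etaSeq B κ y j) 0 := by
  rw [etaSeq_add h κ, Pi.add_apply, min_add_zero (h κ j)]

/-! ### Subordination and `B`-cones -/

/-- `x` is sign-subordinate to `a`: at every stage, the sign of `x` weakly follows `a`. -/
def Subord (B : Matrix (Fin n) (Fin n) ℤ) (a x : Fin n → ℝ) : Prop :=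
  ∀ (κ : List (Fin n)) (j : Fin n),
    (0 ≤ etaSeq B κ a j → 0 ≤ etaSeq B κ x j) ∧
    (etaSeq B κ a j ≤ 0 → etaSeq B κ x j ≤ 0)

lemma subord_self (B : Matrix (Fin n) (Fin n) ℤ) (a : Fin n → ℝ) : Subord B a a :=
  fun _ _ => ⟨id, id⟩

lemma Subord.smul {B : Matrix (Fin n) (Fin n) ℤ} {a x : Fin n → ℝ} (h : Subord B a x)
    {t : ℝ} (ht : 0 ≤ t) : Subord B a (t • x) := by
  intro κ j
  rw [etaSeq_smul B κ x ht, Pi.smul_apply, smul_eq_mul]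
  exact ⟨fun h' => mul_nonneg ht ((h κ j).1 h'),
    fun h' => mul_nonpos_of_nonneg_of_nonpos ht ((h κ j).2 h')⟩

lemma scpair_of_subord {B : Matrix (Fin n) (Fin n) ℤ} {a x y : Fin n → ℝ}
    (hx : Subord B a x) (hy : Subord B a y) : SCpair B x y := by
  intro κ j
  rcases le_total 0 (etaSeq B κ a j) with ha | ha
  · exact Or.inl ⟨(hx κ j).1 ha, (hy κ j).1 ha⟩
  · exact Or.inr ⟨(hx κ j).2 ha, (hy κ j).2 ha⟩

lemma Subord.add {B : Matrix (Fin n) (Fin n) ℤ} {a x y : Fin n → ℝ}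
    (hx : Subord B a x) (hy : Subord B a y) : Subord B a (x + y) := by
  intro κ j
  rw [etaSeq_add (scpair_of_subord hx hy) κ, Pi.add_apply]
  exact ⟨fun h' => add_nonneg ((hx κ j).1 h') ((hy κ j).1 h'),
    fun h' => add_nonpos ((hx κ j).2 h') ((hy κ j).2 h')⟩

lemma isClosed_subord (B : Matrix (Fin n) (Fin n) ℤ) (a : Fin n → ℝ) :
    IsClosed {x | Subord B a x} := by
  have : {x | Subord B a x} =
      ⋂ (κ : List (Fin n)), ⋂ (j : Fin n),
        ({x | 0 ≤ etaSeq B κ a j → 0 ≤ etaSeq B κ x j} ∩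
         {x | etaSeq B κ a j ≤ 0 → etaSeq B κ x j ≤ 0}) := by
    ext x
    simp only [Set.mem_setOf_eq, Set.mem_iInter, Set.mem_inter_iff]
    exact ⟨fun h κ j => h κ j, fun h κ j => h κ j⟩
  rw [this]
  refine isClosed_iInter fun κ => isClosed_iInter fun j => IsClosed.inter ?_ ?_
  · by_cases h : 0 ≤ etaSeq B κ a j
    · have : {x | 0 ≤ etaSeq B κ a j → 0 ≤ etaSeq B κ x j}
          = {x | 0 ≤ etaSeq B κ x j} := by
        ext x; simp [h]
      rw [this]
      exact isClosed_le continuous_const ((continuous_apply j).comp (continuous_etaSeq B κ))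
    · have : {x | 0 ≤ etaSeq B κ a j → 0 ≤ etaSeq B κ x j} = Set.univ := by
        ext x; simp [h]
      rw [this]; exact isClosed_univ
  · by_cases h : etaSeq B κ a j ≤ 0
    · have : {x | etaSeq B κ a j ≤ 0 → etaSeq B κ x j ≤ 0}
          = {x | etaSeq B κ x j ≤ 0} := by
        ext x; simp [h]
      rw [this]
      exact isClosed_le ((continuous_apply j).comp (continuous_etaSeq B κ)) continuous_const
    · have : {x | etaSeq B κ a j ≤ 0 → etaSeq B κ x j ≤ 0} = Set.univ := by
        ext x; simp [h]
      rw [this]; exact isClosed_univ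

private lemma sign_imp_nonneg {p q : ℝ} (h : Real.sign p = Real.sign q) (hp : 0 ≤ p) :
    0 ≤ q := by
  by_contra hq
  push_neg at hq
  rw [Real.sign_of_neg hq] at h
  rcases eq_or_lt_of_le hp with hp0 | hp0
  · rw [← hp0, Real.sign_zero] at h; norm_num at h
  · rw [Real.sign_of_pos hp0] at h; norm_num at h

private lemma sign_imp_nonpos {p q : ℝ} (h : Real.sign p = Real.sign q) (hp : p ≤ 0) :
    q ≤ 0 := by
  by_contra hq
  push_neg at hq
  rw [Real.sign_of_pos hq] at h
  rcases eq_or_lt_of_le hp with hp0 | hp0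
  · rw [hp0, Real.sign_zero] at h; norm_num at h
  · rw [Real.sign_of_neg hp0] at h; norm_num at h

lemma subord_of_eqB {B : Matrix (Fin n) (Fin n) ℤ} {a x : Fin n → ℝ} (h : eqB B a x) :
    Subord B a x := fun κ j =>
  ⟨sign_imp_nonneg (h κ j) , sign_imp_nonpos (h κ j)⟩

/-- The set of vectors subordinate to `a` is exactly the `B`-cone containing `a`. -/
lemma closure_eqB_class (B : Matrix (Fin n) (Fin n) ℤ) (a : Fin n → ℝ) :
    closure {x | eqB B a x} = {x | Subord B a x} := by
  apply Set.Subset.antisymm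
  · exact closure_minimal (fun x hx => subord_of_eqB hx) (isClosed_subord B a)
  · intro x hx
    -- `x + ε a` is in the class of `a` for every `ε > 0`
    have hmem : ∀ ε : ℝ, 0 < ε → eqB B a (x + ε • a) := by
      intro ε hε κ j
      have hsub : Subord B a (ε • a) := (subord_self B a).smul hε.le
      have hadd := etaSeq_add (scpair_of_subord hx hsub) κ
      rw [hadd, Pi.add_apply, etaSeq_smul B κ a hε.le, Pi.smul_apply, smul_eq_mul]
      rcases lt_trichotomy (etaSeq B κ a j) 0 with hc | hc | hc
      · have h1 : etaSeq B κ x j ≤ 0 := (hx κ j).2 hc.le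
        have : etaSeq B κ x j + ε * etaSeq B κ a j < 0 := by nlinarith
        rw [Real.sign_of_neg hc, Real.sign_of_neg this]
      · have h1 : etaSeq B κ x j ≤ 0 := (hx κ j).2 hc.le
        have h2 : 0 ≤ etaSeq B κ x j := (hx κ j).1 hc.ge
        rw [hc, Real.sign_zero, le_antisymm h1 h2]
        norm_num
      · have h1 : 0 ≤ etaSeq B κ x j := (hx κ j).1 hc.le
        have : 0 < etaSeq B κ x j + ε * etaSeq B κ a j := by nlinarith
        rw [Real.sign_of_pos hc, Real.sign_of_pos this]
    -- `x = lim (x + (1/(m+1)) a)`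
    have htend : Filter.Tendsto (fun m : ℕ => x + (1 / ((m : ℝ) + 1)) • a)
        Filter.atTop (nhds x) := by
      have h0 : Filter.Tendsto (fun m : ℕ => (1 / ((m : ℝ) + 1))) Filter.atTop (nhds 0) :=
        tendsto_one_div_add_atTop_nhds_zero_nat
      have := Filter.Tendsto.smul h0 (tendsto_const_nhds (x := a) (f := Filter.atTop))
      have h2 := (tendsto_const_nhds (x := x) (f := (Filter.atTop : Filter ℕ))).add this
      simpa using h2
    refine mem_closure_of_tendsto htend (Filter.Eventually.of_forall fun m => ?_)
    exact hmem _ (by positivity)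

lemma subordCone_mem_mutFan (B : Matrix (Fin n) (Fin n) ℤ) (a : Fin n → ℝ) :
    {x | Subord B a x} ∈ MutFan B :=
  Or.inl ⟨{x | eqB B a x}, ⟨a, rfl⟩, (closure_eqB_class B a).symm⟩

/-! ### Coherent relations: basic consequences -/

lemma subord_of_coherentDiff {B : Matrix (Fin n) (Fin n) ℤ} {a : Fin n → ℝ} {ι : Type*}
    {S : Finset ι} {v : ι → Fin n → ℝ} {c : ι → ℝ} (h : IsBCoherentDiff B a S v c)
    (hc : ∀ i ∈ S, 0 ≤ c i) {i : ι} (hi : i ∈ S) (hci : c i ≠ 0) : Subord B a (v i) := by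
  intro κ j
  obtain ⟨h1, h2⟩ := h κ
  have e1 : etaSeq B κ a j = ∑ i' ∈ S, c i' * etaSeq B κ (v i') j := by
    have := congrFun h1 j
    simp only [Pi.sub_apply, Pi.zero_apply, sub_eq_zero, Finset.sum_apply,
      Pi.smul_apply, smul_eq_mul] at this
    exact this
  have e2 : min (etaSeq B κ a j) 0 = ∑ i' ∈ S, c i' * min (etaSeq B κ (v i') j) 0 := by
    have := congrFun h2 j
    simp only [Pi.sub_apply, Pi.zero_apply, sub_eq_zero, Finset.sum_apply,
      Pi.smul_apply, smul_eq_mul] at this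
    exact this
  constructor
  · intro ha
    rw [min_eq_right ha] at e2
    have hterm : ∀ i' ∈ S, c i' * min (etaSeq B κ (v i') j) 0 ≤ 0 := fun i' hi' =>
      mul_nonpos_of_nonneg_of_nonpos (hc i' hi') (min_le_right _ _)
    have := (Finset.sum_eq_zero_iff_of_nonpos hterm).1 e2.symm i hi
    have hmin : min (etaSeq B κ (v i) j) 0 = 0 := by
      rcases mul_eq_zero.1 this with h' | h'
      · exact absurd h' hci
      · exact h'
    by_contra hneg
    push_neg at hneg
    rw [min_eq_left hneg.le] at hmin
    exact absurd hmin hneg.ne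
  · intro ha
    rw [min_eq_left ha] at e2
    have e3 : ∑ i' ∈ S, c i' * (etaSeq B κ (v i') j - min (etaSeq B κ (v i') j) 0) = 0 := by
      simp only [mul_sub]
      rw [Finset.sum_sub_distrib, ← e1, ← e2, sub_self]
    have hterm : ∀ i' ∈ S, 0 ≤ c i' * (etaSeq B κ (v i') j - min (etaSeq B κ (v i') j) 0) :=
      fun i' hi' => mul_nonneg (hc i' hi') (sub_nonneg.2 (min_le_left _ _))
    have := (Finset.sum_eq_zero_iff_of_nonneg hterm).1 e3 i hi
    have heq : etaSeq B κ (v i) j = min (etaSeq B κ (v i) j) 0 := by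
      rcases mul_eq_zero.1 this with h' | h'
      · exact absurd h' hci
      · linarith [sub_eq_zero.1 h']
    calc etaSeq B κ (v i) j = min (etaSeq B κ (v i) j) 0 := heq
      _ ≤ 0 := min_le_right _ _

/-! ### Rational subring helpers -/

lemma ratSR_iff {x : ℝ} : x ∈ ratSR ↔ ∃ q : ℚ, x = (q : ℝ) := by
  constructor
  · rintro ⟨q, rfl⟩; exact ⟨q, rfl⟩
  · rintro ⟨q, rfl⟩; exact ⟨q, rfl⟩

lemma ratSR_inv {x : ℝ} (hx : x ∈ ratSR) : x⁻¹ ∈ ratSR := by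
  obtain ⟨q, rfl⟩ := ratSR_iff.1 hx
  exact ratSR_iff.2 ⟨q⁻¹, by push_cast; ring⟩

lemma ratSR_rat_points {x : Fin n → ℝ} (hx : ∀ j, x j ∈ ratSR) :
    ∀ j, ∃ q : ℚ, x j = (q : ℝ) := fun j => ratSR_iff.1 (hx j)

lemma ratSR_of_rat_points {x : Fin n → ℝ} (hx : ∀ j, ∃ q : ℚ, x j = (q : ℝ)) :
    ∀ j, x j ∈ ratSR := fun j => ratSR_iff.2 (hx j)

/-- A real ratio between two nonzero rational vectors is rational. -/
lemma ratio_mem_ratSR {x y : Fin n → ℝ} (hx : ∀ j, x j ∈ ratSR) (hy : ∀ j, y j ∈ ratSR)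
    (hy0 : y ≠ 0) {r : ℝ} (h : x = r • y) : r ∈ ratSR := by
  obtain ⟨j, hj⟩ : ∃ j, y j ≠ 0 := by
    by_contra hcon
    push_neg at hcon
    exact hy0 (funext fun j => hcon j)
  have hxj : x j = r * y j := by rw [h, Pi.smul_apply, smul_eq_mul]
  have : r = x j * (y j)⁻¹ := by field_simp [hj] at hxj ⊢; linarith [hxj]
  rw [this]
  exact Subring.mul_mem _ (hx j) (ratSR_inv (hy j))

/-! ### Rays and cones -/

lemma mem_rayOf_self (v : Fin n → ℝ) : v ∈ rayOf v := ⟨1, zero_le_one, (one_smul ℝ v).symm⟩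

lemma zero_mem_rayOf (v : Fin n → ℝ) : (0 : Fin n → ℝ) ∈ rayOf v :=
  ⟨0, le_rfl, (zero_smul ℝ v).symm⟩

lemma smul_mem_rayOf {v x : Fin n → ℝ} (h : x ∈ rayOf v) {t : ℝ} (ht : 0 ≤ t) :
    t • x ∈ rayOf v := by
  obtain ⟨s, hs, rfl⟩ := h
  exact ⟨t * s, mul_nonneg ht hs, (smul_smul t s v)⟩

lemma rayOf_smul {v : Fin n → ℝ} {t : ℝ} (ht : 0 < t) : rayOf (t • v) = rayOf v := by
  ext x
  constructor
  · rintro ⟨s, hs, rfl⟩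
    exact ⟨s * t, mul_nonneg hs ht.le, (smul_smul s t v)⟩
  · rintro ⟨s, hs, rfl⟩
    refine ⟨s / t, div_nonneg hs ht.le, ?_⟩
    rw [smul_smul, div_mul_cancel₀ _ ht.ne']

lemma isRayOf_canon {F : Set (Set (Fin n → ℝ))} {C : Set (Fin n → ℝ)} (h : IsRayOf F C)
    {x : Fin n → ℝ} (hx : x ∈ C) (hx0 : x ≠ 0) : C = rayOf x := by
  obtain ⟨hCF, v, hv0, rfl⟩ := h
  obtain ⟨t, ht, rfl⟩ := hx
  have ht0 : 0 < t := by
    rcases eq_or_lt_of_le ht with h' | h'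
    · exact absurd (by rw [← h', zero_smul]) hx0
    · exact h'
  exact (rayOf_smul ht0).symm

lemma convex_of_isConvexCone {C : Set (Fin n → ℝ)} (h : IsConvexCone C) : Convex ℝ C := by
  intro x hx y hy α β hα hβ hαβ
  rcases eq_or_lt_of_le hα with hα0 | hα0
  · have : β = 1 := by linarith
    rw [← hα0, this, zero_smul, one_smul, zero_add]; exact hy
  rcases eq_or_lt_of_le hβ with hβ0 | hβ0
  · have : α = 1 := by linarith
    rw [← hβ0, this, zero_smul, one_smul, add_zero]; exact hx
  exact h.1 _ (h.2 x hx α hα0) _ (h.2 y hy β hβ0)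

/-- A rational cone contains `0`. -/
lemma zero_mem_of_isRationalCone {C : Set (Fin n → ℝ)} (h : IsRationalCone C) :
    (0 : Fin n → ℝ) ∈ C := by
  obtain ⟨k, v, -, rfl⟩ := h
  exact ⟨fun _ => 0, fun _ => le_rfl, by simp⟩

/-! ### Finset sum helpers -/

private lemma sum_extend {ι : Type*} [DecidableEq ι] {S T : Finset ι} (hST : S ⊆ T)
    (c : ι → ℝ) (f : ι → Fin n → ℝ) :
    ∑ i ∈ T, (if i ∈ S then c i else 0) • f i = ∑ i ∈ S, c i • f i := by
  rw [← Finset.sum_subset hST (fun x _ hx => by rw [if_neg hx, zero_smul])]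
  exact Finset.sum_congr rfl fun x hx => by rw [if_pos hx]

private lemma sum_single {ι : Type*} [DecidableEq ι] {T : Finset ι} {i : ι} (hi : i ∈ T)
    (f : ι → Fin n → ℝ) :
    ∑ i' ∈ T, (if i' = i then (1:ℝ) else 0) • f i' = f i := by
  have : ∀ i' ∈ T, (if i' = i then (1:ℝ) else 0) • f i' =
      if i' = i then f i' else 0 := by
    intro i' _; split_ifs <;> simp
  rw [Finset.sum_congr rfl this, Finset.sum_ite_eq' T i f, if_pos hi]

/-! ### The face of a cone at a point -/

/-- The minimal face of the convex cone `D` containing `u ∈ D`. -/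
def faceAt (D : Set (Fin n → ℝ)) (u : Fin n → ℝ) : Set (Fin n → ℝ) :=
  {x | x ∈ D ∧ ∃ ε : ℝ, 0 < ε ∧ u - ε • x ∈ D}

lemma faceAt_shrink {D : Set (Fin n → ℝ)} (hconv : Convex ℝ D) {u : Fin n → ℝ} (hu : u ∈ D)
    {x : Fin n → ℝ} {ε ε' : ℝ} (hε' : 0 < ε') (hle : ε' ≤ ε) (hεx : u - ε • x ∈ D) :
    u - ε' • x ∈ D := by
  have hε : 0 < ε := lt_of_lt_of_le hε' hle
  have h1 : u - ε' • x = (ε' / ε) • (u - ε • x) + (1 - ε' / ε) • u := by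
    have h2 : ε' / ε * ε = ε' := div_mul_cancel₀ _ hε.ne'
    rw [smul_sub, smul_smul, h2, sub_smul, one_smul]
    abel
  rw [h1]
  exact hconv hεx hu (div_nonneg hε'.le hε.le)
    (by rw [sub_nonneg]; exact div_le_one_of_le₀ hle hε.le) (by ring)

lemma mem_faceAt_self {D : Set (Fin n → ℝ)} (hcone : IsConvexCone D) {u : Fin n → ℝ}
    (hu : u ∈ D) : u ∈ faceAt D u := by
  refine ⟨hu, 1/2, by norm_num, ?_⟩
  have : u - (1/2 : ℝ) • u = (1/2 : ℝ) • u := by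
    funext j; simp only [Pi.sub_apply, Pi.smul_apply, smul_eq_mul]; ring
  rw [this]
  exact hcone.2 u hu _ (by norm_num)

lemma isFaceOf_faceAt {D : Set (Fin n → ℝ)} (hconv : Convex ℝ D) (hcone : IsConvexCone D)
    {u : Fin n → ℝ} (hu : u ∈ D) : IsFaceOf D (faceAt D u) := by
  have hGconv : Convex ℝ (faceAt D u) := by
    intro x hx y hy α β hα hβ hαβ
    obtain rfl : β = 1 - α := by linarith
    refine ⟨hconv hx.1 hy.1 hα hβ hαβ, ?_⟩
    obtain ⟨εx, hεx, hx2⟩ := hx.2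
    obtain ⟨εy, hεy, hy2⟩ := hy.2
    refine ⟨min εx εy, lt_min hεx hεy, ?_⟩
    have hx3 : u - min εx εy • x ∈ D := faceAt_shrink hconv hu (lt_min hεx hεy)
      (min_le_left _ _) hx2
    have hy3 : u - min εx εy • y ∈ D := faceAt_shrink hconv hu (lt_min hεx hεy)
      (min_le_right _ _) hy2
    have halg : u - min εx εy • (α • x + (1-α) • y) =
        α • (u - min εx εy • x) + (1-α) • (u - min εx εy • y) := by
      funext j
      simp only [Pi.sub_apply, Pi.add_apply, Pi.smul_apply, smul_eq_mul]
      ring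
    rw [halg]
    exact hconv hx3 hy3 hα hβ hαβ
  refine ⟨fun x hx => hx.1, hGconv, ?_⟩
  intro x y hseg ⟨z, hzo, hzG⟩
  obtain ⟨α, β, hα, hβ, hαβ, hz⟩ := hzo
  obtain rfl : β = 1 - α := by linarith
  have hxD : x ∈ D := hseg (left_mem_segment ℝ x y)
  have hyD : y ∈ D := hseg (right_mem_segment ℝ x y)
  obtain ⟨ε, hε, hzε⟩ := hzG.2
  have hxG : x ∈ faceAt D u := by
    refine ⟨hxD, ε * α, mul_pos hε hα, ?_⟩
    have halg : u - (ε * α) • x = (u - ε • z) + (ε * (1-α)) • y := by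
      rw [← hz]
      funext j
      simp only [Pi.sub_apply, Pi.add_apply, Pi.smul_apply, smul_eq_mul]
      ring
    rw [halg]
    exact hcone.1 _ hzε _ (hcone.2 y hyD _ (mul_pos hε hβ))
  have hyG : y ∈ faceAt D u := by
    refine ⟨hyD, ε * (1-α), mul_pos hε hβ, ?_⟩
    have halg : u - (ε * (1-α)) • y = (u - ε • z) + (ε * α) • x := by
      rw [← hz]
      funext j
      simp only [Pi.sub_apply, Pi.add_apply, Pi.smul_apply, smul_eq_mul]
      ring
    rw [halg]
    exact hcone.1 _ hzε _ (hcone.2 x hxD _ (mul_pos hε hα))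
  exact hGconv.segment_subset hxG hyG

/-! ### Splitting a basis element -/

lemma ne_zero_of_independent {B : Matrix (Fin n) (Fin n) ℤ} {ι : Type*} {b : ι → Fin n → ℝ}
    (hind : IndependentOver ratSR B b) (i : ι) : b i ≠ 0 := by
  intro h0
  have hrel : IsBCoherentRel B {i} b (fun _ => (1:ℝ)) := by
    intro κ
    constructor
    · rw [Finset.sum_singleton, h0, etaSeq_zero, smul_zero]
    · rw [Finset.sum_singleton, h0, etaSeq_zero]
      funext j
      simp
  have := hind.2 {i} (fun _ => 1) (fun _ _ => Subring.one_mem _) hrel i (Finset.mem_singleton_self i)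
  exact one_ne_zero this

/-- If a basis element is written as a sign-coherent sum of two rational vectors, then
each summand is a nonnegative multiple of the basis element. -/
lemma split_of_basis {B : Matrix (Fin n) (Fin n) ℤ} {ι : Type*} {b : ι → Fin n → ℝ}
    (hind : IndependentOver ratSR B b)
    (hposc : ∀ a : Fin n → ℝ, (∀ j, a j ∈ ratSR) →
      ∃ (S : Finset ι) (c : ι → ℝ), (∀ i ∈ S, c i ∈ ratSR ∧ 0 ≤ c i) ∧ IsBCoherentDiff B a S b c)
    {i : ι} {x y : Fin n → ℝ} (hx : ∀ j, x j ∈ ratSR) (hy : ∀ j, y j ∈ ratSR)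
    (hxy : x + y = b i) (hsc : SCpair B x y) :
    ∃ t : ℝ, 0 ≤ t ∧ x = t • b i := by
  classical
  obtain ⟨Sx, cx, hcx, hdx⟩ := hposc x hx
  obtain ⟨Sy, cy, hcy, hdy⟩ := hposc y hy
  set T := insert i (Sx ∪ Sy) with hT
  have hSxT : Sx ⊆ T := fun a ha => Finset.mem_insert_of_mem (Finset.mem_union_left _ ha)
  have hSyT : Sy ⊆ T := fun a ha => Finset.mem_insert_of_mem (Finset.mem_union_right _ ha)
  have hiT : i ∈ T := Finset.mem_insert_self _ _
  set e : ι → ℝ := fun i' => (if i' ∈ Sx then cx i' else 0) + (if i' ∈ Sy then cy i' else 0)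
    - (if i' = i then 1 else 0) with he
  have hrel : IsBCoherentRel B T b e := by
    intro κ
    obtain ⟨hdx1, hdx2⟩ := hdx κ
    obtain ⟨hdy1, hdy2⟩ := hdy κ
    constructor
    · have hsum : ∑ i' ∈ T, e i' • etaSeq B κ (b i') =
          (∑ i' ∈ Sx, cx i' • etaSeq B κ (b i')) + (∑ i' ∈ Sy, cy i' • etaSeq B κ (b i'))
            - etaSeq B κ (b i) := by
        simp only [he, sub_smul, add_smul]
        rw [Finset.sum_sub_distrib, Finset.sum_add_distrib, sum_extend hSxT, sum_extend hSyT,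
          sum_single hiT]
      rw [hsum]
      have ex : (∑ i' ∈ Sx, cx i' • etaSeq B κ (b i')) = etaSeq B κ x :=
        (sub_eq_zero.1 hdx1).symm
      have ey : (∑ i' ∈ Sy, cy i' • etaSeq B κ (b i')) = etaSeq B κ y :=
        (sub_eq_zero.1 hdy1).symm
      rw [ex, ey, ← etaSeq_add hsc κ, hxy, sub_self]
    · have hsum : ∑ i' ∈ T, e i' • (fun j => min (etaSeq B κ (b i') j) 0) =
          (∑ i' ∈ Sx, cx i' • (fun j => min (etaSeq B κ (b i') j) 0))
          + (∑ i' ∈ Sy, cy i' • (fun j => min (etaSeq B κ (b i') j) 0))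
            - (fun j => min (etaSeq B κ (b i) j) 0) := by
        simp only [he, sub_smul, add_smul]
        rw [Finset.sum_sub_distrib, Finset.sum_add_distrib,
          sum_extend hSxT (f := fun i' => (fun j => min (etaSeq B κ (b i') j) 0)),
          sum_extend hSyT (f := fun i' => (fun j => min (etaSeq B κ (b i') j) 0)),
          sum_single hiT (f := fun i' => (fun j => min (etaSeq B κ (b i') j) 0))]
      rw [hsum]
      have ex : (∑ i' ∈ Sx, cx i' • (fun j => min (etaSeq B κ (b i') j) 0))
          = (fun j => min (etaSeq B κ x j) 0) := (sub_eq_zero.1 hdx2).symm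
      have ey : (∑ i' ∈ Sy, cy i' • (fun j => min (etaSeq B κ (b i') j) 0))
          = (fun j => min (etaSeq B κ y j) 0) := (sub_eq_zero.1 hdy2).symm
      rw [ex, ey]
      have : (fun j => min (etaSeq B κ (b i) j) 0) =
          (fun j => min (etaSeq B κ x j) 0) + (fun j => min (etaSeq B κ y j) 0) := by
        funext j
        rw [Pi.add_apply, ← etaSeq_min_add hsc κ j, hxy]
      rw [this]
      abel
  have heQ : ∀ i' ∈ T, e i' ∈ ratSR := by
    intro i' _
    refine Subring.sub_mem _ (Subring.add_mem _ ?_ ?_) ?_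
    · by_cases h : i' ∈ Sx
      · rw [if_pos h]; exact (hcx i' h).1
      · rw [if_neg h]; exact Subring.zero_mem _
    · by_cases h : i' ∈ Sy
      · rw [if_pos h]; exact (hcy i' h).1
      · rw [if_neg h]; exact Subring.zero_mem _
    · by_cases h : i' = i
      · rw [if_pos h]; exact Subring.one_mem _
      · rw [if_neg h]; exact Subring.zero_mem _
  have hzero := hind.2 T e heQ hrel
  have hq : ∀ i' ∈ Sx, i' ≠ i → cx i' = 0 := by
    intro i' h1 h2
    have h3 := hzero i' (hSxT h1)
    rw [he] at h3
    simp only [if_pos h1, if_neg h2, sub_zero] at h3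
    by_cases h4 : i' ∈ Sy
    · simp only [if_pos h4] at h3
      have := (hcx i' h1).2
      have := (hcy i' h4).2
      linarith
    · simp only [if_neg h4, add_zero] at h3
      exact h3
  have hx0 : x = ∑ i' ∈ Sx, cx i' • b i' := by
    have := (hdx []).1
    rw [etaSeq_nil] at this
    have := sub_eq_zero.1 this
    simpa only [etaSeq_nil] using this
  by_cases hiSx : i ∈ Sx
  · refine ⟨cx i, (hcx i hiSx).2, ?_⟩
    rw [hx0]
    exact Finset.sum_eq_single_of_mem i hiSx fun i' h1 h2 => by rw [hq i' h1 h2, zero_smul]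
  · refine ⟨0, le_rfl, ?_⟩
    rw [hx0, zero_smul]
    exact Finset.sum_eq_zero fun i' h1 => by
      rw [hq i' h1 (fun h => hiSx (h ▸ h1)), zero_smul]

/-! ### The forward direction: a positive ℚ-basis consists of one vector in each ray -/

lemma posBasis_rays {B : Matrix (Fin n) (Fin n) ℤ} {ι : Type*} {b : ι → Fin n → ℝ}
    (hbQ : ∀ i j, b i j ∈ ratSR) {F' : Set (Set (Fin n → ℝ))}
    (hF' : IsRationalPart (MutFan B) F') (hpos : PositiveBasisOver ratSR B b) :
    (∀ i, b i ≠ 0 ∧ ∃ C, IsRayOf F' C ∧ b i ∈ C) ∧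
    (∀ C, IsRayOf F' C → ∃! i : ι, b i ∈ C) := by
  classical
  obtain ⟨⟨hspan, hind⟩, hposc⟩ := hpos
  have hfan := hF'.1
  have hratC := hF'.2.1
  have hbig := hF'.2.2.2
  have hne : ∀ i, b i ≠ 0 := ne_zero_of_independent hind
  -- Part A: each `b i` spans a ray of `F'`.
  have claimA : ∀ i, IsRayOf F' (rayOf (b i)) := by
    intro i
    set u := b i with hu
    have huQ : ∀ j, u j ∈ ratSR := hbQ i
    obtain ⟨D, hDF', hDsubC, hDmax, hDrat⟩ := hbig {x | Subord B u x} (subordCone_mem_mutFan B u)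
    have huD : u ∈ D := hDrat u (subord_self B u) (ratSR_rat_points huQ)
    obtain ⟨hDclosed, hDcone⟩ := hfan.1 D hDF'
    have hDconv := convex_of_isConvexCone hDcone
    have hface := isFaceOf_faceAt hDconv hDcone huD
    have hGF' : faceAt D u ∈ F' := hfan.2.1 D hDF' _ hface
    obtain ⟨k, g, hgQ, hGdesc⟩ := hratC _ hGF'
    -- every generator of the face lies on the ray of `u`
    have hgen : ∀ m : Fin k, g m ∈ rayOf u := by
      intro m
      have hgm : g m ∈ faceAt D u := by
        rw [hGdesc]
        refine ⟨fun m' => if m' = m then 1 else 0,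
          fun m' => by dsimp only; split_ifs <;> norm_num, (sum_single (Finset.mem_univ m) g).symm⟩
      obtain ⟨hgmD, ε, hε, hεD⟩ := hgm
      by_cases hg0 : g m = 0
      · rw [hg0]; exact zero_mem_rayOf u
      obtain ⟨q, hq0, hqε⟩ := exists_rat_btwn hε
      have hq0' : (0:ℝ) < q := by exact_mod_cast hq0
      set x := (q:ℝ) • g m with hxdef
      have hxD : x ∈ D := hDcone.2 _ hgmD _ hq0'
      have hyD : u - x ∈ D := faceAt_shrink hDconv huD hq0' hqε.le hεD
      have hxQ : ∀ j, x j ∈ ratSR := fun j => by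
        rw [hxdef, Pi.smul_apply, smul_eq_mul]
        exact Subring.mul_mem _ ⟨q, rfl⟩ (ratSR_iff.2 (hgQ m j))
      have hyQ : ∀ j, (u - x) j ∈ ratSR := fun j => Subring.sub_mem _ (huQ j) (hxQ j)
      have hsubx : Subord B u x := hDsubC hxD
      have hsuby : Subord B u (u - x) := hDsubC hyD
      have hxy : x + (u - x) = b i := by rw [add_sub_cancel]
      obtain ⟨t, ht, hxt⟩ := split_of_basis hind hposc hxQ hyQ hxy
        (scpair_of_subord hsubx hsuby)
      have hgm_eq : g m = ((q:ℝ)⁻¹ * t) • u := by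
        have h1 : ((q:ℝ)⁻¹) • x = g m := by
          rw [hxdef, smul_smul, inv_mul_cancel₀ hq0'.ne', one_smul]
        rw [← h1, hxt, smul_smul]
      exact ⟨(q:ℝ)⁻¹ * t, mul_nonneg (inv_nonneg.2 hq0'.le) ht, hgm_eq⟩
    have hGray : faceAt D u = rayOf u := by
      apply Set.Subset.antisymm
      · intro x hx
        rw [hGdesc] at hx
        obtain ⟨c, hc, rfl⟩ := hx
        refine Finset.sum_induction _ (· ∈ rayOf u)
          (fun a b' ha hb' => ?_) (zero_mem_rayOf u) (fun m _ => smul_mem_rayOf (hgen m) (hc m))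
        obtain ⟨ta, hta, rfl⟩ := ha
        obtain ⟨tb, htb, rfl⟩ := hb'
        exact ⟨ta + tb, add_nonneg hta htb, (add_smul ta tb u).symm⟩
      · rintro x ⟨t, ht, rfl⟩
        have h0D : (0 : Fin n → ℝ) ∈ D := zero_mem_of_isRationalCone (hratC D hDF')
        have htuD : t • u ∈ D := by
          rcases eq_or_lt_of_le ht with h0 | h0
          · rw [← h0, zero_smul]; exact h0D
          · exact hDcone.2 u huD t h0
        refine ⟨htuD, (t+1)⁻¹, by positivity, ?_⟩
        have heq : u - ((t+1)⁻¹) • (t • u) = ((t+1)⁻¹) • u := by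
          funext j
          simp only [Pi.sub_apply, Pi.smul_apply, smul_eq_mul]
          have h1 : t + 1 ≠ 0 := by positivity
          field_simp
          ring
        rw [heq]
        exact hDcone.2 u huD _ (by positivity)
    exact ⟨hGray ▸ hGF', u, hne i, rfl⟩
  constructor
  · exact fun i => ⟨hne i, rayOf (b i), claimA i, mem_rayOf_self (b i)⟩
  -- Part B: each ray of `F'` contains exactly one basis element.
  intro C hC
  obtain ⟨hCF', v₀, hv₀, hCray⟩ := hC
  obtain ⟨k, g, hgQ, hCdesc⟩ := hratC C hCF'
  have hv₀C : v₀ ∈ C := by rw [hCray]; exact mem_rayOf_self v₀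
  -- find a nonzero rational vector `w` on the ray
  obtain ⟨c₀, hc₀, hv₀eq⟩ : ∃ c : Fin k → ℝ, (∀ m, 0 ≤ c m) ∧ v₀ = ∑ m, c m • g m := by
    have := hv₀C
    rw [hCdesc] at this
    exact this
  obtain ⟨m, hm⟩ : ∃ m, g m ≠ 0 := by
    by_contra hcon
    push_neg at hcon
    apply hv₀
    rw [hv₀eq]
    exact Finset.sum_eq_zero fun m _ => by rw [hcon m, smul_zero]
  set w := g m with hwdef
  have hwC : w ∈ C := by
    rw [hCdesc]
    exact ⟨fun m' => if m' = m then 1 else 0,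
      fun m' => by dsimp only; split_ifs <;> norm_num, (sum_single (Finset.mem_univ m) g).symm⟩
  have hwQ : ∀ j, w j ∈ ratSR := fun j => ratSR_iff.2 (hgQ m j)
  obtain ⟨s, hs, hws⟩ : w ∈ rayOf v₀ := by rw [← hCray]; exact hwC
  have hs0 : 0 < s := by
    rcases eq_or_lt_of_le hs with h0 | h0
    · exact absurd (by rw [hws, ← h0, zero_smul]) hm
    · exact h0
  -- the B-cone of `w` and its biggest rational subcone
  obtain ⟨Dw, hDwF', hDwsubC, hDwmax, hDwrat⟩ :=
    hbig {x | Subord B w x} (subordCone_mem_mutFan B w)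
  have hwDw : w ∈ Dw := hDwrat w (subord_self B w) (hgQ m)
  obtain ⟨hDwclosed, hDwcone⟩ := hfan.1 Dw hDwF'
  have hfc := hfan.2.2 C hCF' Dw hDwF'
  have hCDmem : C ∩ Dw ∈ F' := hfan.2.1 C hCF' _ hfc.1
  obtain ⟨hCDclosed, hCDcone⟩ := hfan.1 _ hCDmem
  have hwCD : w ∈ C ∩ Dw := ⟨hwC, hwDw⟩
  have hCsub : C ⊆ C ∩ Dw := by
    intro x hx
    rw [hCray] at hx
    obtain ⟨t, ht, rfl⟩ := hx
    rcases eq_or_lt_of_le ht with h0 | h0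
    · rw [← h0, zero_smul]
      exact ⟨by rw [hCray]; exact zero_mem_rayOf v₀,
        zero_mem_of_isRationalCone (hratC Dw hDwF')⟩
    · have heq : t • v₀ = (t/s) • w := by
        rw [hws, smul_smul, div_mul_cancel₀ _ hs0.ne']
      rw [heq]
      exact hCDcone.2 w hwCD _ (div_pos h0 hs0)
  have hCDw : C ∩ Dw = C := Set.Subset.antisymm Set.inter_subset_left hCsub
  have hfaceC : IsFaceOf Dw C := by rw [← hCDw]; exact hfc.2
  -- positively span `w` by the basis
  obtain ⟨S, c, hc, hdiff⟩ := hposc w hwQ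
  have hw0 : w = ∑ i' ∈ S, c i' • b i' := by
    have h1 := (hdiff []).1
    rw [sub_eq_zero] at h1
    simpa only [etaSeq_nil] using h1
  obtain ⟨i₀, hi₀S, hci₀⟩ : ∃ i₀ ∈ S, c i₀ ≠ 0 := by
    by_contra hcon
    push_neg at hcon
    apply hm
    rw [hw0]
    exact Finset.sum_eq_zero fun i' h1 => by rw [hcon i' h1, zero_smul]
  have hci₀' : 0 < c i₀ := lt_of_le_of_ne (hc i₀ hi₀S).2 (Ne.symm hci₀)
  have hbDw : ∀ i' ∈ S, c i' ≠ 0 → b i' ∈ Dw := fun i' h1 h2 =>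
    hDwrat _ (subord_of_coherentDiff hdiff (fun i h => (hc i h).2) h1 h2)
      (ratSR_rat_points (hbQ i'))
  have h0Dw : (0 : Fin n → ℝ) ∈ Dw := zero_mem_of_isRationalCone (hratC Dw hDwF')
  set y := ∑ i' ∈ S.erase i₀, c i' • b i' with hydef
  have hyDw : y ∈ Dw := by
    refine Finset.sum_induction _ (· ∈ Dw) (fun a b' ha hb' => hDwcone.1 a ha b' hb') h0Dw ?_
    intro i' h1
    by_cases h2 : c i' = 0
    · rw [h2, zero_smul]; exact h0Dw
    · exact hDwcone.2 _ (hbDw i' (Finset.mem_of_mem_erase h1) h2) _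
        (lt_of_le_of_ne (hc _ (Finset.mem_of_mem_erase h1)).2 (Ne.symm h2))
  have hwsum : w = c i₀ • b i₀ + y := by
    rw [hw0, hydef]
    exact (Finset.add_sum_erase S _ hi₀S).symm
  set p := (2 * c i₀) • b i₀ with hpdef
  set qq := (2:ℝ) • y with hqqdef
  have hpDw : p ∈ Dw := hDwcone.2 _ (hbDw i₀ hi₀S hci₀) _ (by positivity)
  have hqDw : qq ∈ Dw := hDwcone.2 _ hyDw _ two_pos
  have hmid : w = (1/2 : ℝ) • p + (1/2 : ℝ) • qq := by
    rw [hwsum, hpdef, hqqdef]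
    funext j
    simp only [Pi.add_apply, Pi.smul_apply, smul_eq_mul]
    ring
  have hbi₀C : b i₀ ∈ C := by
    have hkey : p ∈ C := by
      by_cases hpq : p = qq
      · have hwp : w = p := by
          rw [hmid, ← hpq]
          funext j
          simp only [Pi.add_apply, Pi.smul_apply, smul_eq_mul]
          ring
        rw [← hwp]; exact hwC
      · have hseg : segment ℝ p qq ⊆ Dw :=
          (convex_of_isConvexCone hDwcone).segment_subset hpDw hqDw
        have hwopen : w ∈ openSegment ℝ p qq :=
          ⟨1/2, 1/2, by norm_num, by norm_num, by norm_num, hmid.symm⟩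
        exact hfaceC.2.2 p qq hseg ⟨w, hwopen, hwC⟩ (left_mem_segment ℝ p qq)
    have hbp : b i₀ = ((2 * c i₀)⁻¹) • p := by
      rw [hpdef, smul_smul, inv_mul_cancel₀ (by positivity), one_smul]
    rw [hbp, hCray]
    apply smul_mem_rayOf _ (by positivity)
    rw [← hCray]; exact hkey
  refine ⟨i₀, hbi₀C, ?_⟩
  intro i' hi'
  by_contra hne'
  have h1 : C = rayOf (b i₀) := isRayOf_canon ⟨hCF', v₀, hv₀, hCray⟩ hbi₀C (hne i₀)
  have h2 : b i' ∈ rayOf (b i₀) := by rw [← h1]; exact hi'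
  obtain ⟨r, hr, hbr⟩ := h2
  have hr0 : r ≠ 0 := fun h => hne i' (by rw [hbr, h, zero_smul])
  have hrQ : r ∈ ratSR := ratio_mem_ratSR (hbQ i') (hbQ i₀) (hne i₀) hbr
  set cc : ι → ℝ := fun x => if x = i₀ then r else if x = i' then -1 else 0 with hccdef
  have hcci : cc i₀ = r := by rw [hccdef]; simp
  have hcci' : cc i' = -1 := by
    rw [hccdef]
    simp [hne']
  have hrel : IsBCoherentRel B {i₀, i'} b cc := by
    have hpairne : i₀ ≠ i' := fun h => hne' h.symm
    intro κ
    have hsum : ∀ f : ι → Fin n → ℝ, ∑ x ∈ ({i₀, i'} : Finset ι), cc x • f x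
        = r • f i₀ - f i' := by
      intro f
      rw [Finset.sum_pair hpairne, hcci, hcci']
      funext j
      simp only [Pi.add_apply, Pi.sub_apply, Pi.smul_apply, smul_eq_mul]
      ring
    constructor
    · rw [hsum]
      have : etaSeq B κ (b i') = r • etaSeq B κ (b i₀) := by
        rw [hbr, etaSeq_smul B κ _ hr]
      rw [this, sub_self]
    · rw [hsum]
      funext j
      simp only [Pi.sub_apply, Pi.smul_apply, smul_eq_mul, Pi.zero_apply]
      rw [hbr, etaSeq_smul B κ _ hr, Pi.smul_apply, smul_eq_mul, min_smul_zero hr]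
      ring
  have hccQ : ∀ x ∈ ({i₀, i'} : Finset ι), cc x ∈ ratSR := by
    intro x _
    rw [hccdef]
    dsimp only
    split_ifs
    · exact hrQ
    · exact Subring.neg_mem _ (Subring.one_mem _)
    · exact Subring.zero_mem _
  have hzero := hind.2 _ cc hccQ hrel i' (by simp)
  rw [hcci'] at hzero
  norm_num at hzero

/-! ### Transport of a positive basis along positive rational rescaling -/

lemma posBasis_transport {B : Matrix (Fin n) (Fin n) ℤ} {ι ι' : Type*} (E : ι ≃ ι')
    {v' : ι' → Fin n → ℝ} (hv' : PositiveBasisOver ratSR B v') {q : ι → ℝ}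
    (hq : ∀ i, 0 < q i) (hqQ : ∀ i, q i ∈ ratSR) {b : ι → Fin n → ℝ}
    (hb : ∀ i, b i = q i • v' (E i)) (hbQ : ∀ i j, b i j ∈ ratSR) :
    PositiveBasisOver ratSR B b := by
  classical
  obtain ⟨⟨⟨hv'Q, hv'span⟩, hv'ind⟩, hv'pos⟩ := hv'
  have key1 : ∀ (i : ι) (κ : List (Fin n)),
      etaSeq B κ (b i) = q i • etaSeq B κ (v' (E i)) := by
    intro i κ
    rw [hb i, etaSeq_smul B κ _ (hq i).le]
  have key2 : ∀ (i : ι) (κ : List (Fin n)),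
      (fun j => min (etaSeq B κ (b i) j) 0) =
        q i • (fun j => min (etaSeq B κ (v' (E i)) j) 0) := by
    intro i κ
    funext j
    rw [key1 i κ, Pi.smul_apply, Pi.smul_apply, smul_eq_mul, smul_eq_mul,
      min_smul_zero (hq i).le]
  -- converting a coherent difference over `v'` into one over `b`
  have conv : ∀ (a : Fin n → ℝ) (S' : Finset ι') (c' : ι' → ℝ),
      IsBCoherentDiff B a S' v' c' →
      IsBCoherentDiff B a (S'.image E.symm) b (fun i => (q i)⁻¹ * c' (E i)) := by
    intro a S' c' hd κ
    obtain ⟨h1, h2⟩ := hd κ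
    have himg : ∀ (f : ι → Fin n → ℝ), ∑ i ∈ S'.image E.symm, f i
        = ∑ i' ∈ S', f (E.symm i') :=
      fun f => Finset.sum_image (fun x _ y _ h => E.symm.injective h)
    constructor
    · rw [sub_eq_zero] at h1 ⊢
      rw [himg]
      rw [h1]
      refine Finset.sum_congr rfl fun i' hi' => ?_
      rw [key1 (E.symm i') κ, smul_smul, E.apply_symm_apply]
      congr 1
      have hne := (hq (E.symm i')).ne'
      field_simp
      rw [E.apply_symm_apply]
    · rw [sub_eq_zero] at h2 ⊢
      rw [himg]
      rw [h2]
      refine Finset.sum_congr rfl fun i' hi' => ?_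
      rw [key2 (E.symm i') κ, smul_smul, E.apply_symm_apply]
      congr 1
      have hne := (hq (E.symm i')).ne'
      field_simp
      rw [E.apply_symm_apply]
  have hmemc : ∀ (S' : Finset ι') (c' : ι' → ℝ), (∀ i' ∈ S', c' i' ∈ ratSR) →
      ∀ i ∈ S'.image E.symm, (q i)⁻¹ * c' (E i) ∈ ratSR := by
    intro S' c' hc' i hi
    obtain ⟨i'', hi'', rfl⟩ := Finset.mem_image.1 hi
    rw [E.apply_symm_apply]
    exact Subring.mul_mem _ (ratSR_inv (hqQ _)) (hc' i'' hi'')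
  refine ⟨⟨⟨hbQ, ?_⟩, ⟨hbQ, ?_⟩⟩, ?_⟩
  · -- spanning
    intro a haQ
    obtain ⟨S', c', hc', hd⟩ := hv'span a haQ
    exact ⟨S'.image E.symm, _, hmemc S' c' hc', conv a S' c' hd⟩
  · -- independence
    intro S c hcQ hrel
    set c' : ι' → ℝ := fun i' => q (E.symm i') * c (E.symm i') with hc'def
    have hrel' : IsBCoherentRel B (S.image E) v' c' := by
      intro κ
      obtain ⟨h1, h2⟩ := hrel κ
      have himg : ∀ (f : ι' → Fin n → ℝ), ∑ i' ∈ S.image E, f i'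
          = ∑ i ∈ S, f (E i) :=
        fun f => Finset.sum_image (fun x _ y _ h => E.injective h)
      constructor
      · rw [himg, ← h1]
        refine Finset.sum_congr rfl fun i hi => ?_
        rw [hc'def]
        dsimp only
        rw [E.symm_apply_apply, key1 i κ, smul_smul, mul_comm (q i) (c i)]
      · rw [himg, ← h2]
        refine Finset.sum_congr rfl fun i hi => ?_
        rw [hc'def]
        dsimp only
        rw [E.symm_apply_apply, key2 i κ, smul_smul, mul_comm (q i) (c i)]
    have hc'Q : ∀ i' ∈ S.image E, c' i' ∈ ratSR := by
      intro i' hi'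
      obtain ⟨i, hi, rfl⟩ := Finset.mem_image.1 hi'
      rw [hc'def]
      dsimp only
      rw [E.symm_apply_apply]
      exact Subring.mul_mem _ (hqQ i) (hcQ i hi)
    have hz := hv'ind.2 (S.image E) c' hc'Q hrel'
    intro i hi
    have h3 := hz (E i) (Finset.mem_image_of_mem E hi)
    rw [hc'def] at h3
    dsimp only at h3
    rw [E.symm_apply_apply] at h3
    rcases mul_eq_zero.1 h3 with h4 | h4
    · exact absurd h4 (hq i).ne'
    · exact h4
  · -- positivity
    intro a haQ
    obtain ⟨S', c', hc', hd⟩ := hv'pos a haQ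
    refine ⟨S'.image E.symm, _, fun i hi => ⟨hmemc S' c' (fun i' h => (hc' i' h).1) i hi, ?_⟩,
      conv a S' c' hd⟩
    obtain ⟨i'', hi'', rfl⟩ := Finset.mem_image.1 hi
    rw [E.apply_symm_apply]
    exact mul_nonneg (inv_nonneg.2 (hq _).le) (hc' i'' hi'').2

/-- Suppose a positive ℚ-basis for `B` exists and `ℱ_B` has a rational
part `F'`. Then a family of vectors in `ℚⁿ` is a positive ℚ-basis for `B` if and only if it
consists of exactly one nonzero vector in each ray of `F'`. -/
theorem positiveBasisOver_rat_iff_rays {n : ℕ} (hn : 1 ≤ n)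
    (B : Matrix (Fin n) (Fin n) ℤ) (hB : IsExchangeMatrix B)
    (hex : ∃ V : Set (Fin n → ℝ), PositiveBasisOver ratSR B (fun v : V => (v : Fin n → ℝ)))
    (F' : Set (Set (Fin n → ℝ))) (hF' : IsRationalPart (MutFan B) F')
    {I : Type} (b : I → Fin n → ℝ) (hbQ : ∀ i j, b i j ∈ ratSR) :
    PositiveBasisOver ratSR B b ↔
      ((∀ i, b i ≠ 0 ∧ ∃ C, IsRayOf F' C ∧ b i ∈ C) ∧
       ∀ C, IsRayOf F' C → ∃! i : I, b i ∈ C) := by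
  classical
  constructor
  · intro hpos
    exact posBasis_rays hbQ hF' hpos
  · intro hRHS
    obtain ⟨V, hV⟩ := hex
    have hVQ : ∀ (u : V) (j : Fin n), (u : Fin n → ℝ) j ∈ ratSR := hV.1.1.1
    have hVrhs := posBasis_rays hVQ hF' hV
    have hVne : ∀ u : V, (u : Fin n → ℝ) ≠ 0 := fun u => (hVrhs.1 u).1
    have hbne : ∀ i, b i ≠ 0 := fun i => (hRHS.1 i).1
    have hbray : ∀ i, IsRayOf F' (rayOf (b i)) := by
      intro i
      obtain ⟨hne0, C, hC, hmem⟩ := hRHS.1 i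
      exact (isRayOf_canon hC hmem hne0) ▸ hC
    have hchoice : ∀ i : I, ∃ u : V, (u : Fin n → ℝ) ∈ rayOf (b i) :=
      fun i => (hVrhs.2 _ (hbray i)).exists
    choose φ hφ using hchoice
    have hφuniq : ∀ (i : I) (u : V), (u : Fin n → ℝ) ∈ rayOf (b i) → u = φ i := by
      intro i u hu
      obtain ⟨u', hu', huniq⟩ := hVrhs.2 _ (hbray i)
      rw [huniq u hu, huniq (φ i) (hφ i)]
    have hscal : ∀ i : I, ∃ r : ℝ, 0 < r ∧ b i = r • (φ i : Fin n → ℝ) := by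
      intro i
      obtain ⟨t, ht, htu⟩ := hφ i
      have ht0 : t ≠ 0 := fun h => hVne (φ i) (by rw [htu, h, zero_smul])
      have htpos : 0 < t := lt_of_le_of_ne ht (Ne.symm ht0)
      refine ⟨t⁻¹, inv_pos.2 htpos, ?_⟩
      rw [htu, smul_smul, inv_mul_cancel₀ ht0, one_smul]
    choose r hr hbr using hscal
    have hinj : Function.Injective φ := by
      intro i i' h
      have e1 : rayOf (b i) = rayOf (φ i : Fin n → ℝ) :=
        isRayOf_canon (hbray i) (hφ i) (hVne (φ i))
      have e2 : rayOf (b i') = rayOf (φ i' : Fin n → ℝ) :=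
        isRayOf_canon (hbray i') (hφ i') (hVne (φ i'))
      have e3 : rayOf (b i) = rayOf (b i') := by rw [e1, e2, h]
      obtain ⟨i'', hi'', huniq⟩ := hRHS.2 _ (hbray i)
      have hbi : b i ∈ rayOf (b i) := mem_rayOf_self _
      have hbi' : b i' ∈ rayOf (b i) := by rw [e3]; exact mem_rayOf_self _
      rw [huniq i hbi, huniq i' hbi']
    have hsurj : Function.Surjective φ := by
      intro u
      obtain ⟨hu0, C', hC', humem⟩ := hVrhs.1 u
      have hCu : C' = rayOf (u : Fin n → ℝ) := isRayOf_canon hC' humem hu0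
      have hCray' : IsRayOf F' (rayOf (u : Fin n → ℝ)) := hCu ▸ hC'
      obtain ⟨i, hbiC, -⟩ := hRHS.2 _ hCray'
      have h4 : rayOf (u : Fin n → ℝ) = rayOf (b i) := isRayOf_canon hCray' hbiC (hbne i)
      refine ⟨i, (hφuniq i u ?_).symm⟩
      rw [← h4]
      exact mem_rayOf_self _
    exact posBasis_transport (Equiv.ofBijective φ ⟨hinj, hsurj⟩) hV hr
      (fun i => ratio_mem_ratSR (hbQ i) (hVQ (φ i)) (hVne (φ i)) (hbr i))
      (fun i => hbr i) hbQ
end MutationFanPaper
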